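/- arXiv:2012.06661 — 10 statements merged into one kernel-verified Lean document; each statement's English description precedes it below -/
import Mathlib

section
/- An element f of the incidence algebra I(X,K) commutes with the standard basis element e_{uv} (where u ≤ v) if and only if f(x,u) = 0 for all x < u, f(v,y) = 0 for all y > v, and f(u,u) = f(v,v). -/
set_option maxHeartbeats 1000000
set_option synthInstance.maxHeartbeats 400000

open Matrix

variable (K X : Type*) [Field K] [Fintype X] [PartialOrder X] [DecidableEq X]

/-- The incidence algebra of a finite poset `X` over `K`, realized as the subalgebra of
matrices `f` with `f x y = 0` whenever `¬ x ≤ y`. -/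
def IncAlg : Subalgebra K (Matrix X X K) where
  carrier := {f | ∀ x y : X, ¬ x ≤ y → f x y = 0}
  zero_mem' := fun _ _ _ => rfl
  add_mem' := fun {f g} hf hg x y h => by
    simp [Matrix.add_apply, hf x y h, hg x y h]
  one_mem' := fun x y h => Matrix.one_apply_ne fun he => h (le_of_eq he)
  mul_mem' := fun {f g} hf hg x y h => by
    rw [Matrix.mul_apply]
    refine Finset.sum_eq_zero fun k _ => ?_
    by_cases hxk : x ≤ k
    · by_cases hky : k ≤ y
      · exact absurd (hxk.trans hky) h
      · rw [hg k y hky, mul_zero]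
    · rw [hf x k hxk, zero_mul]
  algebraMap_mem' := fun c x y h => by
    rw [Matrix.algebraMap_matrix_apply]
    exact if_neg fun he => h (le_of_eq he)

variable {X} in
/-- The standard basis element `e_{xy}` of the incidence algebra, for `x ≤ y`. -/
def eE (x y : X) (h : x ≤ y) : IncAlg K X :=
  ⟨Matrix.single x y 1, by
    intro a b hab
    by_cases hxa : x = a
    · by_cases hyb : y = b
      · subst hxa; subst hyb; exact absurd h hab
      · simp [Matrix.single, hyb]
    · simp [Matrix.single, hxa]⟩

variable {X} in
/-- The maximal length of a chain from `x` to `y` (the length `l(⌊x,y⌋)` of the interval). -/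
noncomputable def chainLen (x y : X) : ℕ :=
  sSup {m | ∃ c : Fin (m + 1) → X, StrictMono c ∧ c 0 = x ∧ c (Fin.last m) = y}

/-- The Jacobson radical of the incidence algebra: the functions vanishing on the diagonal. -/
def radJ : Submodule K (Matrix X X K) :=
  Submodule.span K {f | f ∈ IncAlg K X ∧ ∀ x : X, f x x = 0}

/-- `Jm K X m` is `Span_K {e_{xy} : l(⌊x,y⌋) ≥ m}`, i.e. `J_m = J(I(X,K))^m` for `m ≥ 1`. -/
noncomputable def Jm (m : ℕ) : Submodule K (Matrix X X K) :=
  Submodule.span K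
    {E | ∃ x y : X, x ≤ y ∧ m ≤ chainLen x y ∧ E = Matrix.single x y (1 : K)}

/-- `Lm K X i` is `L_i = Span_K {e_{xy} : l(⌊x,y⌋) = i}`. -/
noncomputable def Lm (i : ℕ) : Submodule K (Matrix X X K) :=
  Submodule.span K
    {E | ∃ x y : X, x ≤ y ∧ chainLen x y = i ∧ E = Matrix.single x y (1 : K)}

/-- The two-sided ideal of `I(X,K)` generated by a subset `S`: the smallest `K`-subspace
containing `S` that is closed under left and right multiplication by elements of `I(X,K)`. -/
def assocGen (S : Set (Matrix X X K)) : Submodule K (Matrix X X K) :=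
  sInf {I | S ⊆ I ∧ ∀ f ∈ IncAlg K X, ∀ g ∈ I, f * g ∈ I ∧ g * f ∈ I}

/-- A poset is connected if any two points are joined by a sequence of comparabilities. -/
def PosetConnected (X : Type*) [PartialOrder X] : Prop :=
  ∀ a b : X, Relation.ReflTransGen (fun u v : X => u ≤ v ∨ v ≤ u) a b

variable {K X} in
/-- `φ` is a Lie automorphism of the incidence algebra. -/
def IsLieAut (φ : IncAlg K X ≃ₗ[K] IncAlg K X) : Prop :=
  ∀ a b : IncAlg K X, φ (a * b - b * a) = φ a * φ b - φ b * φ a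


/-- `f ∈ I(X,K)` commutes with `e_{uv}` iff `f(x,u) = 0` for `x < u`,
`f(v,y) = 0` for `y > v`, and `f(u,u) = f(v,v)`. -/
theorem stmt0 (f : Matrix X X K) (hf : f ∈ IncAlg K X) (u v : X) (huv : u ≤ v) :
    f * Matrix.single u v (1 : K) = Matrix.single u v (1 : K) * f ↔
      (∀ x : X, x < u → f x u = 0) ∧ (∀ y : X, v < y → f v y = 0) ∧ f u u = f v v := by
  constructor
  · intro h
    refine ⟨fun x hx => ?_, fun y hy => ?_, ?_⟩
    · have := congrFun (congrFun h x) v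
      rw [Matrix.mul_single_apply_same,
        Matrix.single_mul_apply_of_ne (1:K) u v x v hx.ne] at this
      simpa using this
    · have := congrFun (congrFun h u) y
      rw [Matrix.single_mul_apply_same,
        Matrix.mul_single_apply_of_ne (1:K) u v u y hy.ne'] at this
      simpa using this.symm
    · have := congrFun (congrFun h u) v
      rw [Matrix.mul_single_apply_same,
        Matrix.single_mul_apply_same] at this
      simpa using this
  · rintro ⟨h1, h2, h3⟩
    ext x y
    by_cases hx : x = u <;> by_cases hy : y = v
    · subst hx; subst hy
      rw [Matrix.mul_single_apply_same,
        Matrix.single_mul_apply_same]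
      simpa using h3
    · subst hx
      rw [Matrix.mul_single_apply_of_ne _ x v x y hy,
        Matrix.single_mul_apply_same]
      by_cases hvy : v ≤ y
      · rw [h2 y (lt_of_le_of_ne hvy (fun hh => hy hh.symm))]; ring
      · rw [hf v y hvy]; ring
    · subst hy
      rw [Matrix.mul_single_apply_same,
        Matrix.single_mul_apply_of_ne _ u y x y hx]
      by_cases hxu : x ≤ u
      · rw [h1 x (lt_of_le_of_ne hxu hx)]; ring
      · rw [hf x u hxu]; ring
    · rw [Matrix.mul_single_apply_of_ne _ u v x y hy,
        Matrix.single_mul_apply_of_ne _ u v x y hx]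
end

section
/- The derived ideal [I(X,K), I(X,K)] (the K-span of all commutators [f,g] = fg − gf) equals the Jacobson radical J(I(X,K)) = {f ∈ I(X,K) : f(x,x) = 0 for all x ∈ X}. -/
set_option maxHeartbeats 1000000
set_option synthInstance.maxHeartbeats 400000

open Matrix

variable (K X : Type*) [Field K] [Fintype X] [PartialOrder X] [DecidableEq X]

variable {K X} in
theorem mulDiag (f g : Matrix X X K) (hf : f ∈ IncAlg K X) (hg : g ∈ IncAlg K X) (x : X) :
    (f * g) x x = f x x * g x x := by
  rw [Matrix.mul_apply]
  apply Finset.sum_eq_single x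
  · intro k _ hk
    by_cases h1 : x ≤ k
    · have h2 : ¬ k ≤ x := fun h => hk (le_antisymm h h1)
      rw [hg k x h2, mul_zero]
    · rw [hf x k h1, zero_mul]
  · intro h; exact absurd (Finset.mem_univ x) h

/-- The radical as a submodule. -/
def Pdiag : Submodule K (Matrix X X K) where
  carrier := {f | f ∈ IncAlg K X ∧ ∀ x : X, f x x = 0}
  add_mem' := fun hf hg => ⟨add_mem hf.1 hg.1, fun x => by
    simp [Matrix.add_apply, hf.2 x, hg.2 x]⟩
  zero_mem' := ⟨zero_mem _, fun _ => rfl⟩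
  smul_mem' := fun c f hf => ⟨Subalgebra.smul_mem _ hf.1 c, fun x => by
    simp [Matrix.smul_apply, hf.2 x]⟩

/-- the derived ideal `[I(X,K), I(X,K)]` equals the Jacobson radical
`{f ∈ I(X,K) : f(x,x) = 0 for all x}`. -/
theorem stmt1 :
    (Submodule.span K {c : Matrix X X K |
        ∃ f ∈ IncAlg K X, ∃ g ∈ IncAlg K X, c = f * g - g * f} : Set (Matrix X X K)) =
      {f : Matrix X X K | f ∈ IncAlg K X ∧ ∀ x : X, f x x = 0} := by
  apply Set.Subset.antisymm
  · have hle : Submodule.span K {c : Matrix X X K |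
        ∃ f ∈ IncAlg K X, ∃ g ∈ IncAlg K X, c = f * g - g * f} ≤ Pdiag K X := by
      rw [Submodule.span_le]
      rintro c ⟨f, hf, g, hg, rfl⟩
      refine ⟨Subalgebra.sub_mem _ (mul_mem hf hg) (mul_mem hg hf), fun x => ?_⟩
      rw [Matrix.sub_apply, mulDiag f g hf hg x, mulDiag g f hg hf x, mul_comm, sub_self]
    exact fun c hc => hle hc
  · intro f hf
    obtain ⟨hfI, hfd⟩ := hf
    rw [Matrix.matrix_eq_sum_single f]
    apply Submodule.sum_mem; intro x _
    apply Submodule.sum_mem; intro y _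
    by_cases hxy : x ≤ y
    · by_cases hxe : x = y
      · subst hxe
        rw [hfd x]
        simp
    
      · have he : Matrix.single x y (f x y) = f x y • Matrix.single x y (1 : K) := by
          ext a b
          simp [Matrix.single, Matrix.smul_apply]
        rw [he]
        apply Submodule.smul_mem
        apply Submodule.subset_span
        refine ⟨Matrix.single x x 1, (eE K x x le_rfl).2,
          Matrix.single x y 1, (eE K x y hxy).2, ?_⟩
        rw [Matrix.single_mul_single_same,
          Matrix.single_mul_single_of_ne (i := x) (j := y) (k := x) (c := (1 : K)) (Ne.symm hxe) 1]
        simp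
    · rw [hfI x y hxy]
      simp
end

section
/- For every positive integer m, the m-th term J_m of the lower central series of J(I(X,K)) (defined by J_1 = [I(X,K), I(X,K)] and J_m = [J_1, J_{m−1}]) equals Span_K{e_{xy} : l(⌊x,y⌋) ≥ m}, where l(⌊x,y⌋) is the maximal length of a chain in the interval from x to y; moreover J_m = J(I(X,K))^m, the m-th associative power of the radical. -/
set_option maxHeartbeats 1000000
set_option synthInstance.maxHeartbeats 400000

open Matrix

variable (K X : Type*) [Field K] [Fintype X] [PartialOrder X] [DecidableEq X]

/-- The lower central series of `I(X,K)`: `lcs 0 = J_1` is the derived ideal and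
`lcs m = J_{m+1} = [J_1, J_m]`. -/
noncomputable def lcs (K X : Type*) [Field K] [Fintype X] [PartialOrder X] [DecidableEq X] :
    ℕ → Submodule K (Matrix X X K)
  | 0 => Submodule.span K
      {c : Matrix X X K | ∃ f ∈ IncAlg K X, ∃ g ∈ IncAlg K X, c = f * g - g * f}
  | m + 1 => Submodule.span K
      {c : Matrix X X K | ∃ f ∈ lcs K X 0, ∃ g ∈ lcs K X m, c = f * g - g * f}

/-- Associative powers of the Jacobson radical: `radPow m = J(I(X,K))^m` (with
`radPow 0 = I(X,K)`). -/
noncomputable def radPow (K X : Type*) [Field K] [Fintype X] [PartialOrder X] [DecidableEq X] :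
    ℕ → Submodule K (Matrix X X K)
  | 0 => Subalgebra.toSubmodule (IncAlg K X)
  | m + 1 => Submodule.span K
      {c : Matrix X X K | ∃ f ∈ radJ K X, ∃ g ∈ radPow K X m, c = f * g}


section Aux

variable {K X : Type*} [Field K] [Fintype X] [PartialOrder X] [DecidableEq X]

/-- The set of chain lengths from `x` to `y`. -/
def chainSet (x y : X) : Set ℕ :=
  {m | ∃ c : Fin (m + 1) → X, StrictMono c ∧ c 0 = x ∧ c (Fin.last m) = y}

lemma chainLen_eq_sSup (x y : X) : chainLen x y = sSup (chainSet x y) := rfl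

lemma chainSet_bdd (x y : X) : BddAbove (chainSet x y) := by
  refine ⟨Fintype.card X, fun m hm => ?_⟩
  obtain ⟨c, hc, -, -⟩ := hm
  have := Fintype.card_le_of_injective c hc.injective
  simp only [Fintype.card_fin] at this
  omega

lemma le_chainLen {x y : X} {m : ℕ} (h : m ∈ chainSet x y) : m ≤ chainLen x y :=
  le_csSup (chainSet_bdd x y) h

lemma one_mem_chainSet {x y : X} (h : x < y) : 1 ∈ chainSet x y := by
  refine ⟨fun i => if i = 0 then x else y, ?_, by simp, by simp [Fin.last]⟩
  intro i j hij
  fin_cases i <;> fin_cases j <;> simp_all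

lemma chainLen_self (x : X) : chainLen x x = 0 := by
  rw [chainLen_eq_sSup]
  have hsub : chainSet x x ⊆ {0} := by
    rintro m ⟨c, hc, hc0, hcl⟩
    have h0 : (0 : Fin (m + 1)) = Fin.last m := hc.injective (hc0.trans hcl.symm)
    have := congrArg Fin.val h0
    simpa [Fin.last] using this.symm
  have hne : (chainSet x x).Nonempty := ⟨0, fun _ => x, fun i j hij => absurd hij (by omega),
    rfl, rfl⟩
  exact le_antisymm (csSup_le hne fun m hm => le_of_eq (hsub hm)) (Nat.zero_le _)

lemma lt_of_one_le_chainLen {x y : X} (hxy : x ≤ y) (h : 1 ≤ chainLen x y) : x < y := by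
  rcases eq_or_lt_of_le hxy with rfl | hlt
  · rw [chainLen_self] at h; omega
  · exact hlt

lemma one_le_chainLen {x y : X} (h : x < y) : 1 ≤ chainLen x y :=
  le_chainLen (one_mem_chainSet h)

lemma exists_chain {x y : X} {m : ℕ} (hm1 : 1 ≤ m) (hxy : x ≤ y) (h : m ≤ chainLen x y) :
    m ∈ chainSet x y := by
  have hne : (chainSet x y).Nonempty := by
    rcases eq_or_lt_of_le hxy with rfl | hlt
    · exact ⟨0, fun _ => x, fun i j hij => absurd hij (by omega), rfl, rfl⟩
    · exact ⟨1, one_mem_chainSet hlt⟩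
  have hmem : chainLen x y ∈ chainSet x y := Nat.sSup_mem hne (chainSet_bdd x y)
  obtain ⟨c, hc, hc0, hcl⟩ := hmem
  refine ⟨fun i => if h2 : (i : ℕ) < m then c ⟨i, by omega⟩ else c (Fin.last (chainLen x y)),
    ?_, ?_, ?_⟩
  · intro i j hij
    dsimp only
    have hij' : (i : ℕ) < (j : ℕ) := hij
    have hjle : (j : ℕ) ≤ m := by omega
    by_cases hjm : (j : ℕ) < m
    · have him : (i : ℕ) < m := by omega
      rw [dif_pos him, dif_pos hjm]
      exact hc (show (⟨(i : ℕ), by omega⟩ : Fin (chainLen x y + 1)) < ⟨(j : ℕ), by omega⟩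
        from hij')
    · have him : (i : ℕ) < m := by omega
      rw [dif_pos him, dif_neg hjm]
      refine hc ?_
      show (i : ℕ) < chainLen x y
      omega
  · dsimp only
    rw [dif_pos (show ((0 : Fin (m + 1)) : ℕ) < m by simp only [Fin.val_zero]; omega)]
    exact hc0
  · dsimp only
    rw [dif_neg (show ¬ ((Fin.last m : ℕ) < m) by simp)]
    exact hcl

lemma strictMono_cons {n : ℕ} {c : Fin (n + 1) → X} (hc : StrictMono c) {x : X}
    (hx : x < c 0) : StrictMono (Fin.cons x c : Fin (n + 2) → X) := by
  rw [Fin.strictMono_iff_lt_succ]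
  intro i
  refine Fin.cases ?_ (fun i' => ?_) i
  · simpa using hx
  · have : (Fin.castSucc i'.succ) = (Fin.castSucc i').succ := (Fin.succ_castSucc i').symm
    rw [this, Fin.cons_succ, Fin.cons_succ]
    exact hc (Fin.castSucc_lt_succ (i := i'))

lemma strictMono_snoc {n : ℕ} {c : Fin (n + 1) → X} (hc : StrictMono c) {y : X}
    (hy : c (Fin.last n) < y) : StrictMono (Fin.snoc c y : Fin (n + 2) → X) := by
  rw [Fin.strictMono_iff_lt_succ]
  intro i
  refine Fin.lastCases ?_ (fun i' => ?_) i
  · rw [Fin.snoc_castSucc, Fin.succ_last, Fin.snoc_last]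
    exact hy
  · rw [Fin.succ_castSucc, Fin.snoc_castSucc, Fin.snoc_castSucc]
    exact hc (Fin.castSucc_lt_succ (i := i'))

lemma chainLen_prepend {x k y : X} {m : ℕ} (hxk : x < k) (hky : k ≤ y)
    (h : m ≤ chainLen k y) : m + 1 ≤ chainLen x y := by
  rcases Nat.eq_zero_or_pos m with rfl | hm
  · exact one_le_chainLen (hxk.trans_le hky)
  · obtain ⟨c, hc, hc0, hcl⟩ := exists_chain hm hky h
    refine le_chainLen ⟨Fin.cons x c, strictMono_cons hc (hc0 ▸ hxk), by simp, ?_⟩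
    rw [← Fin.succ_last, Fin.cons_succ]
    exact hcl

lemma chainLen_append {x k y : X} {m : ℕ} (hxk : x ≤ k) (h : m ≤ chainLen x k)
    (hky : k < y) : m + 1 ≤ chainLen x y := by
  rcases Nat.eq_zero_or_pos m with rfl | hm
  · exact one_le_chainLen (hxk.trans_lt hky)
  · obtain ⟨c, hc, hc0, hcl⟩ := exists_chain hm hxk h
    refine le_chainLen ⟨Fin.snoc c y, strictMono_snoc hc (hcl ▸ hky), ?_, by simp⟩
    rw [show (0 : Fin (m + 2)) = Fin.castSucc 0 from rfl, Fin.snoc_castSucc]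
    exact hc0

lemma chain_split {x y : X} {n : ℕ} (hxy : x ≤ y) (h : n + 2 ≤ chainLen x y) :
    ∃ k : X, x < k ∧ k ≤ y ∧ n + 1 ≤ chainLen k y := by
  obtain ⟨c, hc, hc0, hcl⟩ := exists_chain (by omega) hxy h
  refine ⟨c 1, hc0 ▸ hc (by simp [Fin.lt_def]), hcl ▸ hc.monotone (Fin.le_last 1), ?_⟩
  refine le_chainLen ⟨fun i => c i.succ, hc.comp Fin.strictMono_succ, rfl, ?_⟩
  show c (Fin.last (n + 1)).succ = y
  rw [Fin.succ_last]
  exact hcl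

end Aux

section Main

variable (K X : Type*) [Field K] [Fintype X] [PartialOrder X] [DecidableEq X]

/-- Matrices supported on pairs `x ≤ y` with `chainLen x y ≥ m`, as a submodule. -/
def JmSet (m : ℕ) : Submodule K (Matrix X X K) where
  carrier := {f | ∀ x y : X, ¬(x ≤ y ∧ m ≤ chainLen x y) → f x y = 0}
  zero_mem' := fun _ _ _ => rfl
  add_mem' := fun {f g} hf hg x y h => by
    simp [Matrix.add_apply, hf x y h, hg x y h]
  smul_mem' := fun c f hf x y h => by
    simp [Matrix.smul_apply, hf x y h]

variable {K X}

lemma mem_JmSet {m : ℕ} {f : Matrix X X K} :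
    f ∈ JmSet K X m ↔ ∀ x y : X, ¬(x ≤ y ∧ m ≤ chainLen x y) → f x y = 0 := Iff.rfl

lemma mem_IncAlg_iff {f : Matrix X X K} :
    f ∈ IncAlg K X ↔ ∀ x y : X, ¬ x ≤ y → f x y = 0 := Iff.rfl

lemma stdBasisMatrix_mem_JmSet {x y : X} {m : ℕ} (hxy : x ≤ y) (hm : m ≤ chainLen x y) :
    Matrix.single x y (1 : K) ∈ JmSet K X m := by
  intro a b hab
  refine Matrix.single_apply_of_ne (c := (1 : K)) (i := x) (j := y) (i' := a) (j' := b) fun h => ?_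
  exact hab ⟨h.1 ▸ h.2 ▸ hxy, h.1 ▸ h.2 ▸ hm⟩

lemma Jm_eq_JmSet (m : ℕ) : Jm K X m = JmSet K X m := by
  apply le_antisymm
  · rw [Jm, Submodule.span_le]
    rintro E ⟨x, y, hxy, hm, rfl⟩
    exact stdBasisMatrix_mem_JmSet hxy hm
  · intro f hf
    rw [Jm]
    rw [Matrix.matrix_eq_sum_single f]
    refine Submodule.sum_mem _ fun x _ => Submodule.sum_mem _ fun y _ => ?_
    by_cases h : x ≤ y ∧ m ≤ chainLen x y
    · have : Matrix.single x y (f x y) = f x y • Matrix.single x y (1 : K) := by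
        rw [Matrix.smul_single, smul_eq_mul, mul_one]
      rw [this]
      exact Submodule.smul_mem _ _ (Submodule.subset_span ⟨x, y, h.1, h.2, rfl⟩)
    · rw [hf x y h, Matrix.single_zero]
      exact Submodule.zero_mem _

lemma JmSet_zero_eq : JmSet K X 0 = Subalgebra.toSubmodule (IncAlg K X) := by
  ext f
  rw [mem_JmSet, Subalgebra.mem_toSubmodule, mem_IncAlg_iff]
  constructor
  · intro h x y hxy
    exact h x y fun hc => hxy hc.1
  · intro h x y hxy
    by_cases hle : x ≤ y
    · exact absurd ⟨hle, Nat.zero_le _⟩ hxy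
    · exact h x y hle

lemma radJ_eq_JmSet : radJ K X = JmSet K X 1 := by
  apply le_antisymm
  · rw [radJ, Submodule.span_le]
    rintro f ⟨hinc, hdiag⟩ x y hxy
    by_cases hle : x ≤ y
    · rcases eq_or_lt_of_le hle with rfl | hlt
      · exact hdiag x
      · exact absurd ⟨hle, one_le_chainLen hlt⟩ hxy
    · exact hinc x y hle
  · intro f hf
    refine Submodule.subset_span ⟨fun x y hxy => hf x y fun hc => hxy hc.1, fun x => ?_⟩
    exact hf x x fun hc => by rw [chainLen_self] at hc; omega

lemma mul_mem_JmSet_left {f g : Matrix X X K} {m : ℕ} (hf : f ∈ JmSet K X 1)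
    (hg : g ∈ JmSet K X m) : f * g ∈ JmSet K X (m + 1) := by
  intro x y hxy
  rw [Matrix.mul_apply]
  refine Finset.sum_eq_zero fun k _ => ?_
  by_cases h1 : x ≤ k ∧ 1 ≤ chainLen x k
  · by_cases h2 : k ≤ y ∧ m ≤ chainLen k y
    · exact absurd ⟨h1.1.trans h2.1,
        chainLen_prepend (lt_of_one_le_chainLen h1.1 h1.2) h2.1 h2.2⟩ hxy
    · rw [hg k y h2, mul_zero]
  · rw [hf x k h1, zero_mul]

lemma mul_mem_JmSet_right {f g : Matrix X X K} {m : ℕ} (hf : f ∈ JmSet K X m)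
    (hg : g ∈ JmSet K X 1) : f * g ∈ JmSet K X (m + 1) := by
  intro x y hxy
  rw [Matrix.mul_apply]
  refine Finset.sum_eq_zero fun k _ => ?_
  by_cases h1 : x ≤ k ∧ m ≤ chainLen x k
  · by_cases h2 : k ≤ y ∧ 1 ≤ chainLen k y
    · exact absurd ⟨h1.1.trans h2.1,
        chainLen_append h1.1 h1.2 (lt_of_one_le_chainLen h2.1 h2.2)⟩ hxy
    · rw [hg k y h2, mul_zero]
  · rw [hf x k h1, zero_mul]

lemma radPow_eq_Jm (n : ℕ) : radPow K X (n + 1) = Jm K X (n + 1) := by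
  induction n with
  | zero =>
    apply le_antisymm
    · rw [radPow, Submodule.span_le]
      rintro c ⟨f, hf, g, hg, rfl⟩
      rw [SetLike.mem_coe, Jm_eq_JmSet]
      have hf1 : f ∈ JmSet K X 1 := radJ_eq_JmSet (K := K) (X := X) ▸ hf
      have hg0 : g ∈ JmSet K X 0 := by
        rw [JmSet_zero_eq]
        exact hg
      exact mul_mem_JmSet_left hf1 hg0
    · rw [Jm, Submodule.span_le]
      rintro E ⟨x, y, hxy, hm, rfl⟩
      rw [SetLike.mem_coe, radPow]
      have : Matrix.single x y (1 : K) = Matrix.single x y (1 : K) * 1 :=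
        (mul_one _).symm
      rw [this]
      refine Submodule.subset_span ⟨_, ?_, 1, ?_, rfl⟩
      · refine Submodule.subset_span ⟨?_, ?_⟩
        · intro a b hab
          refine Matrix.single_apply_of_ne (c := (1 : K)) (i := x) (j := y) (i' := a) (j' := b) fun h => hab (h.1 ▸ h.2 ▸ hxy)
        · intro a
          refine Matrix.single_apply_of_ne (c := (1 : K)) (i := x) (j := y) (i' := a) (j' := a) fun h => ?_
          have hlt : x < y := lt_of_one_le_chainLen hxy hm
          exact absurd (h.1.trans h.2.symm) hlt.ne
      · show (1 : Matrix X X K) ∈ radPow K X 0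
        rw [radPow]
        simpa using (IncAlg K X).one_mem
  | succ n ih =>
    apply le_antisymm
    · rw [radPow, Submodule.span_le]
      rintro c ⟨f, hf, g, hg, rfl⟩
      rw [SetLike.mem_coe, Jm_eq_JmSet]
      have hf1 : f ∈ JmSet K X 1 := radJ_eq_JmSet (K := K) (X := X) ▸ hf
      have hgn : g ∈ JmSet K X (n + 1) := by
        rw [← Jm_eq_JmSet, ← ih]; exact hg
      exact mul_mem_JmSet_left hf1 hgn
    · rw [Jm, Submodule.span_le]
      rintro E ⟨x, y, hxy, hm, rfl⟩
      rw [SetLike.mem_coe, radPow]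
      obtain ⟨k, hxk, hky, hk⟩ := chain_split hxy hm
      have hsplit : Matrix.single x y (1 : K) =
          Matrix.single x k (1 : K) * Matrix.single k y (1 : K) := by
        rw [Matrix.single_mul_single_same, one_mul]
      rw [hsplit]
      refine Submodule.subset_span ⟨_, ?_, _, ?_, rfl⟩
      · rw [radJ_eq_JmSet]
        exact stdBasisMatrix_mem_JmSet hxk.le (one_le_chainLen hxk)
      · rw [ih]
        exact Submodule.subset_span ⟨k, y, hky, hk, rfl⟩

lemma lcs_zero_eq : lcs K X 0 = Jm K X 1 := by
  apply le_antisymm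
  · rw [lcs, Submodule.span_le]
    rintro c ⟨f, hf, g, hg, rfl⟩
    rw [SetLike.mem_coe, Jm_eq_JmSet]
    intro x y hxy
    rw [Matrix.sub_apply]
    by_cases hle : x ≤ y
    · rcases eq_or_lt_of_le hle with rfl | hlt
      · have hfg : (f * g) x x = f x x * g x x := by
          rw [Matrix.mul_apply]
          refine Finset.sum_eq_single x (fun k _ hk => ?_) (by simp)
          by_cases h1 : x ≤ k
          · by_cases h2 : k ≤ x
            · exact absurd (le_antisymm h2 h1) hk
            · rw [hg k x h2, mul_zero]
          · rw [hf x k h1, zero_mul]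
        have hgf : (g * f) x x = g x x * f x x := by
          rw [Matrix.mul_apply]
          refine Finset.sum_eq_single x (fun k _ hk => ?_) (by simp)
          by_cases h1 : x ≤ k
          · by_cases h2 : k ≤ x
            · exact absurd (le_antisymm h2 h1) hk
            · rw [hf k x h2, mul_zero]
          · rw [hg x k h1, zero_mul]
        rw [hfg, hgf, mul_comm, sub_self]
      · exact absurd ⟨hle, one_le_chainLen hlt⟩ hxy
    · rw [(IncAlg K X).mul_mem hf hg x y hle, (IncAlg K X).mul_mem hg hf x y hle, sub_self]
  · rw [Jm, Submodule.span_le]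
    rintro E ⟨x, y, hxy, hm, rfl⟩
    rw [SetLike.mem_coe, lcs]
    have hlt : x < y := lt_of_one_le_chainLen hxy hm
    have key : Matrix.single x y (1 : K) =
        Matrix.single x x (1 : K) * Matrix.single x y (1 : K) -
        Matrix.single x y (1 : K) * Matrix.single x x (1 : K) := by
      rw [Matrix.single_mul_single_same, one_mul,
        Matrix.single_mul_single_of_ne (h := hlt.ne'), sub_zero]
    rw [key]
    refine Submodule.subset_span ⟨_, ?_, _, ?_, rfl⟩
    · exact (eE K x x le_rfl).2
    · exact (eE K x y hxy).2
  
lemma lcs_eq_Jm (n : ℕ) : lcs K X n = Jm K X (n + 1) := by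
  induction n with
  | zero => exact lcs_zero_eq
  | succ n ih =>
    apply le_antisymm
    · rw [lcs, Submodule.span_le]
      rintro c ⟨f, hf, g, hg, rfl⟩
      rw [SetLike.mem_coe, Jm_eq_JmSet]
      have hf1 : f ∈ JmSet K X 1 := by
        have h0 : lcs K X 0 = JmSet K X 1 := by rw [lcs_zero_eq, Jm_eq_JmSet]
        exact h0 ▸ hf
      have hgn : g ∈ JmSet K X (n + 1) := by
        rw [← Jm_eq_JmSet, ← ih]; exact hg
      exact Submodule.sub_mem _ (mul_mem_JmSet_left hf1 hgn) (mul_mem_JmSet_right hgn hf1)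
    · rw [Jm, Submodule.span_le]
      rintro E ⟨x, y, hxy, hm, rfl⟩
      rw [SetLike.mem_coe, lcs]
      obtain ⟨k, hxk, hky, hk⟩ := chain_split hxy hm
      have hlt : x < y := hxk.trans_le hky
      have key : Matrix.single x y (1 : K) =
          Matrix.single x k (1 : K) * Matrix.single k y (1 : K) -
          Matrix.single k y (1 : K) * Matrix.single x k (1 : K) := by
        rw [Matrix.single_mul_single_same, one_mul,
          Matrix.single_mul_single_of_ne (h := hlt.ne'), sub_zero]
      rw [key]
      refine Submodule.subset_span ⟨_, ?_, _, ?_, rfl⟩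
      · rw [lcs_zero_eq]
        exact Submodule.subset_span ⟨x, k, hxk.le, one_le_chainLen hxk, rfl⟩
      · rw [ih]
        exact Submodule.subset_span ⟨k, y, hky, hk, rfl⟩

end Main

/-- for each `m ≥ 1`, `J_m = Span_K{e_{xy} : l(⌊x,y⌋) ≥ m}` and
`J_m = J(I(X,K))^m`. -/
theorem stmt2 (m : ℕ) (hm : 1 ≤ m) :
    lcs K X (m - 1) = Jm K X m ∧ lcs K X (m - 1) = radPow K X m := by
  obtain ⟨n, rfl⟩ : ∃ n, m = n + 1 := ⟨m - 1, (Nat.succ_pred_eq_of_pos hm).symm⟩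
  simp only [Nat.add_sub_cancel]
  exact ⟨lcs_eq_Jm n, (lcs_eq_Jm n).trans (radPow_eq_Jm n).symm⟩
end

section
/- The center of the Lie algebra (J(I(X,K)), [·,·]) equals Span_K{e_{xy} : x < y, x is a minimal element of X and y is a maximal element of X}. -/
set_option maxHeartbeats 1000000
set_option synthInstance.maxHeartbeats 400000

open Matrix

variable (K X : Type*) [Field K] [Fintype X] [PartialOrder X] [DecidableEq X]

section Aux
variable {K X}

/-- The set generating `radJ` is already a submodule. -/
def radSet : Submodule K (Matrix X X K) where
  carrier := {f | f ∈ IncAlg K X ∧ ∀ x, f x x = 0}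
  zero_mem' := ⟨(IncAlg K X).zero_mem, fun _ => rfl⟩
  add_mem' := fun hf hg => ⟨(IncAlg K X).add_mem hf.1 hg.1,
    fun x => by simp [Matrix.add_apply, hf.2 x, hg.2 x]⟩
  smul_mem' := fun c f hf => ⟨(IncAlg K X).smul_mem hf.1 c,
    fun x => by simp [Matrix.smul_apply, hf.2 x]⟩

lemma radJ_eq_radSet : radJ K X = (radSet : Submodule K (Matrix X X K)) :=
  Submodule.span_eq (radSet : Submodule K (Matrix X X K))

lemma mem_radJ_iff {f : Matrix X X K} :
    f ∈ radJ K X ↔ f ∈ IncAlg K X ∧ ∀ x, f x x = 0 := by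
  rw [radJ_eq_radSet]; rfl

lemma stdBasis_mem_radJ {x y : X} (h : x < y) :
    Matrix.single x y (1 : K) ∈ radJ K X := by
  refine Submodule.subset_span ⟨(eE K x y h.le).2, fun a => ?_⟩
  exact Matrix.single_apply_of_ne (c := (1 : K)) (h := fun he => h.ne (he.1.trans he.2.symm))

end Aux

section Aux2
variable {K X}

/-- The center of `J` is a submodule. -/
def centerJ : Submodule K (Matrix X X K) where
  carrier := {f | f ∈ radJ K X ∧ ∀ g ∈ radJ K X, f * g = g * f}
  zero_mem' := ⟨zero_mem _, fun g _ => by simp⟩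
  add_mem' := fun hf hg => ⟨add_mem hf.1 hg.1, fun g hgJ => by
    rw [add_mul, mul_add, hf.2 g hgJ, hg.2 g hgJ]⟩
  smul_mem' := fun c f hf => ⟨Submodule.smul_mem _ c hf.1, fun g hgJ => by
    rw [smul_mul_assoc, mul_smul_comm, hf.2 g hgJ]⟩

end Aux2

theorem centerJ_eq : (centerJ : Submodule K (Matrix X X K)) =
      Submodule.span K {E : Matrix X X K |
          ∃ x y : X, x < y ∧ IsMin x ∧ IsMax y ∧ E = Matrix.single x y (1 : K)} := by
  apply le_antisymm
  · -- center ⊆ span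
    intro f hf
    obtain ⟨hfJ, hcomm⟩ := hf
    rw [mem_radJ_iff] at hfJ
    obtain ⟨hI, hd⟩ := hfJ
    -- columns at non-maximal indices vanish
    have h1 : ∀ a : X, ¬ IsMax a → ∀ u, f u a = 0 := by
      intro a ha u
      rcases not_isMax_iff.mp ha with ⟨b, hab⟩
      have hc := hcomm _ (stdBasis_mem_radJ (K := K) hab)
      by_cases hu : u = a
      · rw [hu]; exact hd a
      · have := congrFun (congrFun hc u) b
        rw [Matrix.mul_single_apply_same,
            Matrix.single_mul_apply_of_ne _ _ _ _ _ hu] at this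
        simpa using this
    have h2 : ∀ b : X, ¬ IsMin b → ∀ v, f b v = 0 := by
      intro b hb v
      rcases not_isMin_iff.mp hb with ⟨a, hab⟩
      have hc := hcomm _ (stdBasis_mem_radJ (K := K) hab)
      by_cases hv : v = b
      · rw [hv]; exact hd b
      · have := congrFun (congrFun hc a) v
        rw [Matrix.single_mul_apply_same,
            Matrix.mul_single_apply_of_ne _ _ _ _ _ hv] at this
        simpa using this.symm
    rw [Matrix.matrix_eq_sum_single f]
    refine Submodule.sum_mem _ fun u _ => Submodule.sum_mem _ fun v _ => ?_
    by_cases h0 : f u v = 0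
    · rw [h0, Matrix.single_zero]; exact zero_mem _
    · have hmin : IsMin u := by_contra fun h => h0 (h2 u h v)
      have hmax : IsMax v := by_contra fun h => h0 (h1 v h u)
      have hle : u ≤ v := by_contra fun h => h0 (hI u v h)
      have hne : u ≠ v := fun he => h0 (he ▸ hd u)
      have : Matrix.single u v (f u v) = f u v • Matrix.single u v (1 : K) := by
        rw [Matrix.smul_single, smul_eq_mul, mul_one]
      rw [this]
      exact Submodule.smul_mem _ _
        (Submodule.subset_span ⟨u, v, lt_of_le_of_ne hle hne, hmin, hmax, rfl⟩)
  · -- span ⊆ center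
    rw [Submodule.span_le]
    rintro E ⟨x, y, hxy, hmin, hmax, rfl⟩
    refine ⟨stdBasis_mem_radJ hxy, fun g hg => ?_⟩
    rw [mem_radJ_iff] at hg
    obtain ⟨hgI, hgd⟩ := hg
    have hgy : ∀ v, g y v = 0 := by
      intro v
      by_cases hyv : y ≤ v
      · have : v = y := le_antisymm (hmax hyv) hyv
        rw [this]; exact hgd y
      · exact hgI y v hyv
    have hgx : ∀ u, g u x = 0 := by
      intro u
      by_cases hux : u ≤ x
      · have : u = x := le_antisymm hux (hmin hux)
        rw [this]; exact hgd x
      · exact hgI u x hux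
    ext u v
    rw [Matrix.mul_apply, Matrix.mul_apply]
    rw [Finset.sum_eq_zero, Finset.sum_eq_zero]
    · intro k _
      by_cases hk : k = x
      · subst hk; rw [hgx u, zero_mul]
      · rw [Matrix.single_apply_of_ne (h := fun h => hk h.1.symm), mul_zero]
    · intro k _
      by_cases hk : k = y
      · subst hk; rw [hgy v, mul_zero]
      · rw [Matrix.single_apply_of_ne (h := fun h => hk h.2.symm), zero_mul]

/-- the center of the Lie algebra `J(I(X,K))` is
`Span_K{e_{xy} : x < y, x minimal, y maximal}`. -/
theorem stmt4 :
    {f : Matrix X X K | f ∈ radJ K X ∧ ∀ g ∈ radJ K X, f * g = g * f} =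
      (Submodule.span K {E : Matrix X X K |
          ∃ x y : X, x < y ∧ IsMin x ∧ IsMax y ∧ E = Matrix.single x y (1 : K)} :
        Set (Matrix X X K)) := by
  have := congrArg (SetLike.coe) (centerJ_eq (K := K) (X := X))
  exact this
end

section
/- For x ≤ y in X, the two-sided (associative) ideal of I(X,K) generated by e_{xy} equals Span_K{e_{uv} : u ≤ x and y ≤ v}. -/
set_option maxHeartbeats 1000000
set_option synthInstance.maxHeartbeats 400000

open Matrix

variable (K X : Type*) [Field K] [Fintype X] [PartialOrder X] [DecidableEq X]

section Aux
variable {K X : Type*} [Field K] [Fintype X] [DecidableEq X]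

lemma mul_std_eq (f : Matrix X X K) (u v : X) :
    f * Matrix.single u v 1 = ∑ w, f w u • Matrix.single w v 1 := by
  ext a b
  simp only [Matrix.sum_apply, Matrix.smul_apply, Matrix.single, Matrix.of_apply,
    smul_ite, smul_eq_mul, mul_one, smul_zero, Matrix.mul_apply]
  by_cases hb : b = v
  · subst hb
    rw [Finset.sum_eq_single u, Finset.sum_eq_single a] <;> simp +contextual [eq_comm]
  · simp [Ne.symm hb]

lemma std_mul_eq (f : Matrix X X K) (u v : X) :
    Matrix.single u v 1 * f = ∑ w, f v w • Matrix.single u w 1 := by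
  ext a b
  simp only [Matrix.sum_apply, Matrix.smul_apply, Matrix.single, Matrix.of_apply,
    smul_ite, smul_eq_mul, mul_one, smul_zero, Matrix.mul_apply]
  by_cases ha : a = u
  · subst ha
    rw [Finset.sum_eq_single v, Finset.sum_eq_single b] <;> simp +contextual [eq_comm]
  · simp [Ne.symm ha]

end Aux

/-- for `x ≤ y`, the two-sided ideal of `I(X,K)` generated by `e_{xy}` is
`Span_K{e_{uv} : u ≤ x, y ≤ v}`. -/
theorem stmt7 (x y : X) (h : x ≤ y) :
    assocGen K X {Matrix.single x y (1 : K)} =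
      Submodule.span K {E : Matrix X X K |
        ∃ u v : X, u ≤ x ∧ y ≤ v ∧ E = Matrix.single u v (1 : K)} := by
  apply le_antisymm
  · apply sInf_le
    refine ⟨?_, ?_⟩
    · intro E hE
      rw [Set.mem_singleton_iff] at hE
      subst hE
      exact Submodule.subset_span ⟨x, y, le_refl x, le_refl y, rfl⟩
    · intro f hf g hg
      constructor
      · induction hg using Submodule.span_induction with
        | mem E hE =>
          obtain ⟨u, v, hux, hyv, rfl⟩ := hE
          rw [mul_std_eq]
          refine Submodule.sum_mem _ fun w _ => ?_
          by_cases hw : w ≤ u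
          · exact Submodule.smul_mem _ _
              (Submodule.subset_span ⟨w, v, hw.trans hux, hyv, rfl⟩)
          · rw [hf w u hw, zero_smul]; exact Submodule.zero_mem _
        | zero => rw [mul_zero]; exact Submodule.zero_mem _
        | add a b _ _ ha hb => rw [mul_add]; exact Submodule.add_mem _ ha hb
        | smul c a _ ha => rw [mul_smul_comm]; exact Submodule.smul_mem _ _ ha
      · induction hg using Submodule.span_induction with
        | mem E hE =>
          obtain ⟨u, v, hux, hyv, rfl⟩ := hE
          rw [std_mul_eq]
          refine Submodule.sum_mem _ fun w _ => ?_
          by_cases hw : v ≤ w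
          · exact Submodule.smul_mem _ _
              (Submodule.subset_span ⟨u, w, hux, hyv.trans hw, rfl⟩)
          · rw [hf v w hw, zero_smul]; exact Submodule.zero_mem _
        | zero => rw [zero_mul]; exact Submodule.zero_mem _
        | add a b _ _ ha hb => rw [add_mul]; exact Submodule.add_mem _ ha hb
        | smul c a _ ha => rw [smul_mul_assoc]; exact Submodule.smul_mem _ _ ha
  · rw [Submodule.span_le]
    rintro E ⟨u, v, hux, hyv, rfl⟩
    simp only [assocGen, Submodule.mem_sInf, Set.mem_setOf_eq, SetLike.mem_coe]
    rintro I ⟨hIS, hImul⟩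
    have hxy : Matrix.single x y (1 : K) ∈ I := hIS rfl
    have hux' : Matrix.single u x (1 : K) ∈ IncAlg K X := (eE K u x hux).2
    have hyv' : Matrix.single y v (1 : K) ∈ IncAlg K X := (eE K y v hyv).2
    have h1 := (hImul _ hux' _ hxy).1
    rw [Matrix.single_mul_single_same, one_mul] at h1
    have h2 := (hImul _ hyv' _ h1).2
    rwa [Matrix.single_mul_single_same, one_mul] at h2
end

section
/- If e_{xy} lies in the two-sided ideal of I(X,K) generated by a subset S of J(I(X,K)), then there exist f ∈ S and elements u, v with x ≤ u < v ≤ y such that f(u,v) ≠ 0. -/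
set_option maxHeartbeats 1000000
set_option synthInstance.maxHeartbeats 400000

open Matrix

variable (K X : Type*) [Field K] [Fintype X] [PartialOrder X] [DecidableEq X]

/-- Auxiliary: submodule of matrices in the incidence algebra with zero diagonal. -/
def radTarget : Submodule K (Matrix X X K) where
  carrier := {f | (∀ a b : X, ¬ a ≤ b → f a b = 0) ∧ ∀ a : X, f a a = 0}
  zero_mem' := ⟨fun _ _ _ => rfl, fun _ => rfl⟩
  add_mem' := fun {f g} hf hg => by
    refine ⟨fun a b h => ?_, fun a => ?_⟩
    · simp [Matrix.add_apply, hf.1 a b h, hg.1 a b h]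
    · simp [Matrix.add_apply, hf.2 a, hg.2 a]
  smul_mem' := fun c f hf => by
    refine ⟨fun a b h => ?_, fun a => ?_⟩
    · simp [Matrix.smul_apply, hf.1 a b h]
    · simp [Matrix.smul_apply, hf.2 a]

variable {X} in
/-- Auxiliary: matrices vanishing on the "window" between `x` and `y`. -/
def windowSub (x y : X) : Submodule K (Matrix X X K) where
  carrier := {M | ∀ u v : X, x ≤ u → v ≤ y → M u v = 0}
  zero_mem' := fun _ _ _ _ => rfl
  add_mem' := fun {f g} hf hg u v hu hv => by
    simp [Matrix.add_apply, hf u v hu hv, hg u v hu hv]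
  smul_mem' := fun c f hf u v hu hv => by
    simp [Matrix.smul_apply, hf u v hu hv]

/-- if `e_{xy}` lies in the two-sided ideal generated by `S ⊆ J(I(X,K))`, then
some `f ∈ S` has `f(u,v) ≠ 0` with `x ≤ u < v ≤ y`. -/
theorem stmt8 (S : Set (Matrix X X K)) (hS : ∀ f ∈ S, f ∈ radJ K X)
    (x y : X) (hxy : x ≤ y)
    (hmem : Matrix.single x y (1 : K) ∈ assocGen K X S) :
    ∃ f ∈ S, ∃ u v : X, x ≤ u ∧ u < v ∧ v ≤ y ∧ f u v ≠ 0 := by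
  by_contra hcon
  push_neg at hcon
  -- every element of radJ is in radTarget
  have hradle : radJ K X ≤ radTarget K X := by
    apply Submodule.span_le.mpr
    intro f hf
    exact ⟨hf.1, hf.2⟩
  -- S ⊆ windowSub x y
  have hSsub : S ⊆ (windowSub K x y : Set (Matrix X X K)) := by
    intro f hfS u v hu hv
    have hfr := hradle (hS f hfS)
    by_cases huv : u < v
    · exact hcon f hfS u v hu huv hv
    · by_cases heq : u = v
      · subst heq; exact hfr.2 u
      · exact hfr.1 u v (fun h => huv (lt_of_le_of_ne h heq))
  -- windowSub is closed under multiplication by IncAlg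
  have hclosed : ∀ f ∈ IncAlg K X, ∀ g ∈ windowSub K x y,
      f * g ∈ windowSub K x y ∧ g * f ∈ windowSub K x y := by
    intro f hf g hg
    constructor
    · intro u v hu hv
      rw [Matrix.mul_apply]
      refine Finset.sum_eq_zero fun k _ => ?_
      by_cases huk : u ≤ k
      · rw [hg k v (hu.trans huk) hv, mul_zero]
      · rw [hf u k huk, zero_mul]
    · intro u v hu hv
      rw [Matrix.mul_apply]
      refine Finset.sum_eq_zero fun k _ => ?_
      by_cases hkv : k ≤ v
      · rw [hg u k hu (hkv.trans hv), zero_mul]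
      · rw [hf k v hkv, mul_zero]
  have hle : assocGen K X S ≤ windowSub K x y :=
    sInf_le ⟨hSsub, hclosed⟩
  have := hle hmem x y le_rfl le_rfl
  simp [Matrix.single] at this
end

section
/- For any subset S of J(I(X,K)), the two-sided associative ideal generated by S coincides with the Lie ideal generated by S. Consequently, every Lie ideal of I(X,K) contained in J(I(X,K)) is a two-sided associative ideal. -/
set_option maxHeartbeats 1000000
set_option synthInstance.maxHeartbeats 400000

open Matrix

variable (K X : Type*) [Field K] [Fintype X] [PartialOrder X] [DecidableEq X]

/-- The Lie ideal of `I(X,K)` generated by a subset `S`: the smallest `K`-subspace containing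
`S` closed under commutators with all elements of `I(X,K)`. -/
def lieGen (K X : Type*) [Field K] [Fintype X] [PartialOrder X] [DecidableEq X]
    (S : Set (Matrix X X K)) : Submodule K (Matrix X X K) :=
  sInf {I : Submodule K (Matrix X X K) |
    S ⊆ I ∧ ∀ f ∈ IncAlg K X, ∀ g ∈ I, f * g - g * f ∈ I}

set_option linter.unusedSectionVars false
set_option linter.unnecessarySimpa false

namespace Stmt9Aux

variable {K X}

lemma triple (i j k l : X) (M : Matrix X X K) :
    single i j (1:K) * M * single k l 1 = M j k • single i l 1 := by
  ext a b
  by_cases hb : b = l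
  · subst hb
    by_cases ha : a = i
    · subst ha; simp [mul_comm]
    · simp only [Matrix.smul_apply]
      rw [Matrix.mul_single_apply_same,
        Matrix.single_mul_apply_of_ne 1 i j a k ha,
        Matrix.single_apply_of_row_ne (fun h => ha h.symm)]
      simp
  · simp only [Matrix.smul_apply]
    rw [Matrix.mul_single_apply_of_ne 1 k l a b hb,
      Matrix.single_apply_of_col_ne i a (fun h => hb h.symm)]
    simp

lemma mem_IncAlg_iff {f : Matrix X X K} :
    f ∈ IncAlg K X ↔ ∀ x y : X, ¬ x ≤ y → f x y = 0 := Iff.rfl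

lemma E_mem {x y : X} (h : x ≤ y) : single x y (1:K) ∈ IncAlg K X := by
  intro a b hab
  by_cases hxa : x = a
  · by_cases hyb : y = b
    · subst hxa; subst hyb; exact absurd h hab
    · simp [Matrix.single, hyb]
  · simp [Matrix.single, hxa]

lemma mem_radJ {g : Matrix X X K} (hg : g ∈ radJ K X) :
    g ∈ IncAlg K X ∧ ∀ x : X, g x x = 0 := by
  have : radJ K X ≤
      { carrier := {f : Matrix X X K | f ∈ IncAlg K X ∧ ∀ x : X, f x x = 0}
        zero_mem' := ⟨(IncAlg K X).zero_mem, fun _ => rfl⟩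
        add_mem' := fun {a b} ha hb =>
          ⟨(IncAlg K X).add_mem ha.1 hb.1, fun x => by
            simp [Matrix.add_apply, ha.2 x, hb.2 x]⟩
        smul_mem' := fun c {a} ha =>
          ⟨(IncAlg K X).smul_mem ha.1 c, fun x => by
            simp [Matrix.smul_apply, ha.2 x]⟩ } :=
    Submodule.span_le.2 fun f hf => hf
  exact this hg

lemma radJ_lie_closed {f g : Matrix X X K} (hf : f ∈ IncAlg K X) (hg : g ∈ radJ K X) :
    f * g - g * f ∈ radJ K X := by
  obtain ⟨hgA, hgd⟩ := mem_radJ hg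
  refine Submodule.subset_span ⟨sub_mem (mul_mem hf hgA) (mul_mem hgA hf), fun x => ?_⟩
  have h1 : (f * g) x x = 0 := by
    rw [Matrix.mul_apply]
    refine Finset.sum_eq_zero fun k _ => ?_
    by_cases hxk : x ≤ k
    · by_cases hkx : k ≤ x
      · have : k = x := le_antisymm hkx hxk
        subst this; rw [hgd k, mul_zero]
      · rw [hgA k x hkx, mul_zero]
    · rw [hf x k hxk, zero_mul]
  have h2 : (g * f) x x = 0 := by
    rw [Matrix.mul_apply]
    refine Finset.sum_eq_zero fun k _ => ?_
    by_cases hxk : x ≤ k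
    · by_cases hkx : k ≤ x
      · have : k = x := le_antisymm hkx hxk
        subst this; rw [hgd k, zero_mul]
      · rw [hf k x hkx, mul_zero]
    · rw [hgA x k hxk, zero_mul]
  simp [Matrix.sub_apply, h1, h2]

section KeyClosure

variable {I : Submodule K (Matrix X X K)} (hrad : I ≤ radJ K X)
  (hLie : ∀ f ∈ IncAlg K X, ∀ g ∈ I, f * g - g * f ∈ I)

include hrad hLie in
lemma component_mem {g : Matrix X X K} (hg : g ∈ I) (x y : X) :
    g x y • single x y (1:K) ∈ I := by
  obtain ⟨hgA, hgd⟩ := mem_radJ (hrad hg)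
  by_cases hxy : x = y
  · subst hxy; rw [hgd x]; simpa using I.zero_mem
  by_cases hle : x ≤ y
  · have hyx : ¬ y ≤ x := fun h => hxy (le_antisymm hle h)
    set ex := single x x (1:K) with hex
    set ey := single y y (1:K) with hey
    have h1 := hLie ex (E_mem le_rfl) g hg
    have h2 := hLie ey (E_mem le_rfl) _ h1
    have hrw : ey * (ex * g - g * ex) - (ex * g - g * ex) * ey
        = -(g x y • single x y 1) := by
      have e1 : ey * (ex * g) = 0 := by
        rw [← mul_assoc, hex, hey, Matrix.single_mul_single_of_ne (1:K) y y x (fun h => hxy h.symm) 1,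
          Matrix.zero_mul]
      have e2 : ey * (g * ex) = 0 := by
        rw [← mul_assoc, hex, hey, triple, hgA y x hyx, zero_smul]
      have e3 : ex * g * ey = g x y • single x y 1 := by
        rw [hex, hey, triple]
      have e4 : g * ex * ey = 0 := by
        rw [mul_assoc, hex, hey, Matrix.single_mul_single_of_ne (1:K) x x y hxy 1, Matrix.mul_zero]
      rw [mul_sub, sub_mul, e1, e2, e3, e4]
      abel
    rw [hrw] at h2
    simpa using I.neg_mem h2
  · rw [hgA x y hle, zero_smul]; exact I.zero_mem

include hrad hLie in
lemma component_absorb {x y : X} (hle : x ≤ y) (hxy : x ≠ y) {c : K}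
    (hc : c • single x y (1:K) ∈ I) {f : Matrix X X K} (hf : f ∈ IncAlg K X) :
    f * (c • single x y (1:K)) ∈ I ∧ (c • single x y (1:K)) * f ∈ I := by
  set E := single x y (1:K) with hE
  set h := c • E with hh
  have hyx : ¬ y ≤ x := fun hh' => hxy (le_antisymm hle hh')
  have hfyx : f y x = 0 := hf y x hyx
  have b1 := hLie f hf h hc
  constructor
  · have b2 := hLie (single y y 1) (E_mem le_rfl) _ b1
    have hrw : single y y (1:K) * (f * h - h * f) - (f * h - h * f) * single y y 1
        = f y y • h - f * h := by
      have e1 : single y y (1:K) * (f * h) = 0 := by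
        rw [hh, mul_smul_comm, mul_smul_comm, ← mul_assoc, hE, triple, hfyx, zero_smul, smul_zero]
      have e2 : single y y (1:K) * (h * f) = 0 := by
        rw [hh, smul_mul_assoc, mul_smul_comm, ← mul_assoc, hE,
          Matrix.single_mul_single_of_ne (1:K) y y x (fun h' => hxy h'.symm) 1, Matrix.zero_mul, smul_zero]
      have e3 : (f * h) * single y y (1:K) = f * h := by
        rw [hh, mul_smul_comm, smul_mul_assoc, mul_assoc, hE,
          Matrix.single_mul_single_same, mul_one]
      have e4 : (h * f) * single y y (1:K) = f y y • h := by
        rw [hh, smul_mul_assoc, smul_mul_assoc, hE, triple, smul_comm]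
      rw [mul_sub, sub_mul, e1, e2, e3, e4]
      abel
    rw [hrw] at b2
    have := I.sub_mem (I.smul_mem (f y y) hc) b2
    simpa using this
  · have b3 := hLie (single x x 1) (E_mem le_rfl) _ b1
    have hrw : single x x (1:K) * (f * h - h * f) - (f * h - h * f) * single x x 1
        = f x x • h - h * f := by
      have e1 : single x x (1:K) * (f * h) = f x x • h := by
        rw [hh, mul_smul_comm, mul_smul_comm, ← mul_assoc, hE, triple, smul_comm]
      have e2 : single x x (1:K) * (h * f) = h * f := by
        rw [hh, smul_mul_assoc, mul_smul_comm, ← mul_assoc, hE,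
          Matrix.single_mul_single_same, one_mul]
      have e3 : (f * h) * single x x (1:K) = 0 := by
        rw [hh, mul_smul_comm, smul_mul_assoc, mul_assoc, hE,
          Matrix.single_mul_single_of_ne (1:K) x y x (fun h' => hxy h'.symm) 1, Matrix.mul_zero, smul_zero]
      have e4 : (h * f) * single x x (1:K) = 0 := by
        rw [hh, smul_mul_assoc, smul_mul_assoc, hE, triple, hfyx, zero_smul, smul_zero]
      rw [mul_sub, sub_mul, e1, e2, e3, e4]
      abel
    rw [hrw] at b3
    have := I.sub_mem (I.smul_mem (f x x) hc) b3
    simpa using this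

include hrad hLie in
lemma key_closure {f : Matrix X X K} (hf : f ∈ IncAlg K X) {g : Matrix X X K} (hg : g ∈ I) :
    f * g ∈ I ∧ g * f ∈ I := by
  obtain ⟨hgA, hgd⟩ := mem_radJ (hrad hg)
  have hdec : g = ∑ x : X, ∑ y : X, g x y • single x y (1:K) := by
    conv_lhs => rw [matrix_eq_sum_single g]
    refine Finset.sum_congr rfl fun x _ => Finset.sum_congr rfl fun y _ => ?_
    rw [smul_single, smul_eq_mul, mul_one]
  have hterm : ∀ x y : X, f * (g x y • single x y (1:K)) ∈ I ∧
      (g x y • single x y (1:K)) * f ∈ I := by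
    intro x y
    by_cases hxy : x = y
    · subst hxy; rw [hgd x, zero_smul]
      simpa using ⟨I.zero_mem, I.zero_mem⟩
    by_cases hle : x ≤ y
    · exact component_absorb hrad hLie hle hxy (component_mem hrad hLie hg x y) hf
    · rw [hgA x y hle, zero_smul]
      simpa using ⟨I.zero_mem, I.zero_mem⟩
  constructor
  · rw [hdec, Finset.mul_sum]
    refine Submodule.sum_mem _ fun x _ => ?_
    rw [Finset.mul_sum]
    exact Submodule.sum_mem _ fun y _ => (hterm x y).1
  · rw [hdec, Finset.sum_mul]
    refine Submodule.sum_mem _ fun x _ => ?_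
    rw [Finset.sum_mul]
    exact Submodule.sum_mem _ fun y _ => (hterm x y).2

end KeyClosure
end Stmt9Aux

/-- for `S ⊆ J(I(X,K))`, the associative ideal generated by `S` equals the Lie
ideal generated by `S`; consequently every Lie ideal contained in `J(I(X,K))` is a two-sided
associative ideal. -/
theorem stmt9 :
    (∀ S : Set (Matrix X X K), (∀ f ∈ S, f ∈ radJ K X) →
      assocGen K X S = lieGen K X S) ∧
    (∀ I : Submodule K (Matrix X X K), I ≤ radJ K X →
      (∀ f ∈ IncAlg K X, ∀ g ∈ I, f * g - g * f ∈ I) →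
      ∀ f ∈ IncAlg K X, ∀ g ∈ I, f * g ∈ I ∧ g * f ∈ I) := by
  have part2 : ∀ I : Submodule K (Matrix X X K), I ≤ radJ K X →
      (∀ f ∈ IncAlg K X, ∀ g ∈ I, f * g - g * f ∈ I) →
      ∀ f ∈ IncAlg K X, ∀ g ∈ I, f * g ∈ I ∧ g * f ∈ I :=
    fun I h1 h2 f hf g hg => Stmt9Aux.key_closure h1 h2 hf hg
  refine ⟨?_, part2⟩
  intro S hS
  have hSsub : S ⊆ (lieGen K X S : Set (Matrix X X K)) := fun s hs =>
    Submodule.mem_sInf.2 fun I hI => hI.1 hs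
  have hlieclosed : ∀ f ∈ IncAlg K X, ∀ g ∈ lieGen K X S, f * g - g * f ∈ lieGen K X S :=
    fun f hf g hg => Submodule.mem_sInf.2 fun I hI => hI.2 f hf g (Submodule.mem_sInf.1 hg I hI)
  have hrad : lieGen K X S ≤ radJ K X :=
    sInf_le ⟨fun s hs => hS s hs, fun f hf g hg => Stmt9Aux.radJ_lie_closed hf hg⟩
  apply le_antisymm
  · exact sInf_le ⟨hSsub, part2 _ hrad hlieclosed⟩
  · exact sInf_le_sInf fun I hI => ⟨hI.1, fun f hf g hg =>
      sub_mem (hI.2 f hf g hg).1 (hI.2 f hf g hg).2⟩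
end

section
/- Let I ⊆ J_m be a two-sided ideal of I(X,K) such that dim_K(I / (I ∩ J_{m+1})) = 1. Then there exists a unique basis element e_{xy} ∈ J_m − J_{m+1} such that every f ∈ I − J_{m+1} has the form f = f(x,y)·e_{xy} + j with j ∈ J_{m+1}. -/
set_option maxHeartbeats 1000000
set_option synthInstance.maxHeartbeats 400000

open Matrix

variable (K X : Type*) [Field K] [Fintype X] [PartialOrder X] [DecidableEq X]

variable {K X} in
lemma mem_Jm_iff {n : ℕ} {g : Matrix X X K} :
    g ∈ Jm K X n ↔ ∀ x y : X, g x y ≠ 0 → x ≤ y ∧ n ≤ chainLen x y := by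
  constructor
  · intro hg x y hne
    by_contra h
    refine hne ?_
    have hle : Jm K X n ≤
        { carrier := {f : Matrix X X K | ∀ a b : X, ¬(a ≤ b ∧ n ≤ chainLen a b) → f a b = 0}
          zero_mem' := fun _ _ _ => rfl
          add_mem' := fun {f g} hf hg a b hab => by
            simp [Matrix.add_apply, hf a b hab, hg a b hab]
          smul_mem' := fun c f hf a b hab => by
            simp [Matrix.smul_apply, hf a b hab] } := by
      refine Submodule.span_le.2 ?_
      rintro E ⟨u, v, huv, hn', rfl⟩ a b hab
      by_cases hu : u = a
      · by_cases hv : v = b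
        · exact absurd ⟨hu ▸ hv ▸ huv, hu ▸ hv ▸ hn'⟩ hab
        · exact Matrix.single_apply_of_ne _ _ _ _ _ (by tauto)
      · exact Matrix.single_apply_of_ne _ _ _ _ _ (by tauto)
    exact hle hg x y h
  · intro h
    rw [Matrix.matrix_eq_sum_single g]
    refine Submodule.sum_mem _ fun x _ => Submodule.sum_mem _ fun y _ => ?_
    by_cases hxy : g x y = 0
    · simp [hxy]
    · rw [show Matrix.single x y (g x y) = g x y • Matrix.single x y 1 by
        rw [Matrix.smul_single, smul_eq_mul, mul_one]]
      exact Submodule.smul_mem _ _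
        (Submodule.subset_span ⟨x, y, (h x y hxy).1, (h x y hxy).2, rfl⟩)

variable {K X} in
lemma diag_mul_mul_diag (M : Matrix X X K) (x y : X) :
    Matrix.single x x (1 : K) * M * Matrix.single y y 1
      = M x y • Matrix.single x y 1 := by
  ext a b
  by_cases ha : a = x
  · subst ha
    by_cases hb : b = y
    · subst hb; simp
    · rw [Matrix.mul_single_apply_of_ne _ _ _ _ _ hb]
      simp [Ne.symm hb]
  · rw [Matrix.mul_apply]
    have : ∀ k ∈ Finset.univ, (Matrix.single x x (1 : K) * M) a k *
        Matrix.single y y (1 : K) k b = 0 := fun k _ => by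
      rw [Matrix.single_mul_apply_of_ne _ _ _ _ _ ha, zero_mul]
    rw [Finset.sum_eq_zero this]
    simp [Ne.symm ha]

variable {K X} in
lemma diag_mem_IncAlg (x : X) : Matrix.single x x (1 : K) ∈ IncAlg K X := by
  intro a b hab
  refine Matrix.single_apply_of_ne _ _ _ _ _ ?_
  rintro ⟨rfl, rfl⟩
  exact hab le_rfl

/-- if `I ⊆ J_m` is a two-sided ideal of `I(X,K)` with
`dim_K(I/(I ∩ J_{m+1})) = 1`, then there is a unique `e_{xy} ∈ J_m − J_{m+1}` such that every
`f ∈ I − J_{m+1}` is of the form `f = f(x,y)·e_{xy} + j` with `j ∈ J_{m+1}`. -/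
theorem stmt11 (m : ℕ) (hm : 1 ≤ m) (I : Submodule K (Matrix X X K))
    (hI : I ≤ Jm K X m)
    (hideal : ∀ f ∈ IncAlg K X, ∀ g ∈ I, f * g ∈ I ∧ g * f ∈ I)
    (hdim : Module.finrank K (↥I ⧸ (Jm K X (m + 1) ⊓ I).comap I.subtype) = 1) :
    ∃! p : X × X, p.1 ≤ p.2 ∧
      Matrix.single p.1 p.2 (1 : K) ∈ Jm K X m ∧
      Matrix.single p.1 p.2 (1 : K) ∉ Jm K X (m + 1) ∧
      ∀ f ∈ I, f ∉ Jm K X (m + 1) →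
        f - f p.1 p.2 • Matrix.single p.1 p.2 (1 : K) ∈ Jm K X (m + 1) := by
  -- Step 1: find f₀ ∈ I, f₀ ∉ Jm (m+1)
  have hnt : Nontrivial (↥I ⧸ (Jm K X (m + 1) ⊓ I).comap I.subtype) :=
    Module.nontrivial_of_finrank_pos (R := K) (by rw [hdim]; norm_num)
  obtain ⟨q, hq⟩ := exists_ne (0 : ↥I ⧸ (Jm K X (m + 1) ⊓ I).comap I.subtype)
  obtain ⟨f₀, rfl⟩ := Submodule.Quotient.mk_surjective _ q
  have hf₀ : (f₀ : Matrix X X K) ∉ Jm K X (m + 1) := by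
    intro hmem
    exact hq ((Submodule.Quotient.mk_eq_zero _).2 ⟨hmem, f₀.2⟩)
  -- Step 2: find (x, y) with chainLen = m and f₀ x y ≠ 0
  have hf₀m : (f₀ : Matrix X X K) ∈ Jm K X m := hI f₀.2
  have : ¬ ∀ x y : X, (f₀ : Matrix X X K) x y ≠ 0 → x ≤ y ∧ m + 1 ≤ chainLen x y :=
    fun h => hf₀ (mem_Jm_iff.2 h)
  push_neg at this
  obtain ⟨x, y, hne, hbad⟩ := this
  have hxy : x ≤ y ∧ m ≤ chainLen x y := mem_Jm_iff.1 hf₀m x y hne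
  have hchain : chainLen x y = m := by
    rcases hbad hxy.1 with h
    omega
  -- e := stdBasisMatrix x y 1
  set E : Matrix X X K := Matrix.single x y 1 with hE
  have hEJm : E ∈ Jm K X m :=
    Submodule.subset_span ⟨x, y, hxy.1, hxy.2, rfl⟩
  have hEnot : E ∉ Jm K X (m + 1) := by
    intro h
    have := (mem_Jm_iff.1 h x y (by simp [hE])).2
    omega
  -- Step 3: E ∈ I
  have hprod : (f₀ : Matrix X X K) x y • E ∈ I := by
    have h1 := (hideal _ (diag_mem_IncAlg x) _ f₀.2).1
    have h2 := (hideal _ (diag_mem_IncAlg y) _ h1).2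
    rwa [diag_mul_mul_diag] at h2
  have hEI : E ∈ I := by
    have := I.smul_mem ((f₀ : Matrix X X K) x y)⁻¹ hprod
    rwa [smul_smul, inv_mul_cancel₀ hne, one_smul] at this
  -- Step 4: for all f ∈ I, f - f x y • E ∈ Jm (m+1)
  have hmain : ∀ f ∈ I, f - f x y • E ∈ Jm K X (m + 1) := by
    intro f hf
    have hEq : (Submodule.Quotient.mk (⟨E, hEI⟩ : I) :
        ↥I ⧸ (Jm K X (m + 1) ⊓ I).comap I.subtype) ≠ 0 := by
      intro h
      exact hEnot ((Submodule.Quotient.mk_eq_zero _).1 h).1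
    obtain ⟨c, hc⟩ := (finrank_eq_one_iff_of_nonzero' _ hEq).1 hdim
      (Submodule.Quotient.mk (⟨f, hf⟩ : I))
    rw [← Submodule.Quotient.mk_smul, Submodule.Quotient.eq] at hc
    have hcJ : c • E - f ∈ Jm K X (m + 1) := hc.1
    have hfc : f - c • E ∈ Jm K X (m + 1) := by
      have := (Jm K X (m + 1)).neg_mem hcJ
      rwa [neg_sub] at this
    have hcval : c = f x y := by
      have h0 : (f - c • E) x y = 0 := by
        by_contra h0
        have := (mem_Jm_iff.1 hfc x y h0).2
        omega
      have h1 : f x y - c * 1 = 0 := by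
        simpa [hE, Matrix.sub_apply, Matrix.smul_apply] using h0
      rw [mul_one, sub_eq_zero] at h1
      exact h1.symm
    rw [← hcval]
    exact hfc
  refine ⟨(x, y), ⟨hxy.1, hEJm, hEnot, fun f hf _ => hmain f hf⟩, ?_⟩
  -- uniqueness
  rintro ⟨x', y'⟩ ⟨hle', hJm', hnot', hprop'⟩
  have hEE := hprop' E hEI hEnot
  by_contra hneq
  have hval : E x' y' = 0 := by
    refine Matrix.single_apply_of_ne _ _ _ _ _ ?_
    rintro ⟨rfl, rfl⟩
    exact hneq rfl
  rw [hval, zero_smul, sub_zero] at hEE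
  exact hEnot hEE
end

section
/- Let φ be an elementary Lie automorphism of I(X,K) (i.e., φ(L_i) ⊆ L_i for all i ≥ 0), with θ its induced bijection of B = {e_{xy} : x < y} and σ : {(x,y) : x < y} → K* its induced scalar map, so that φ(e_{xy}) = σ(x,y)·θ(e_{xy}). Then for all x < y < z: either θ(e_{xz}) = θ(e_{xy})·θ(e_{yz}) and σ(x,z) = σ(x,y)σ(y,z), or θ(e_{xz}) = θ(e_{yz})·θ(e_{xy}) and σ(x,z) = −σ(x,y)σ(y,z). -/
set_option maxHeartbeats 1000000
set_option synthInstance.maxHeartbeats 400000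

open Matrix

variable (K X : Type*) [Field K] [Fintype X] [PartialOrder X] [DecidableEq X]

variable {K X} in
/-- `φ` is elementary: `φ(L_i) ⊆ L_i` for every `i ≥ 0`. -/
def IsElementary (φ : IncAlg K X ≃ₗ[K] IncAlg K X) : Prop :=
  ∀ (i : ℕ) (a : IncAlg K X), (a : Matrix X X K) ∈ Lm K X i →
    (φ a : Matrix X X K) ∈ Lm K X i


variable {K X} in
lemma smul_std_eq_smul_std {s t : K} (hs : s ≠ 0) {p q a d : X}
    (h : s • Matrix.single p q (1 : K) = t • Matrix.single a d (1 : K)) :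
    p = a ∧ q = d ∧ s = t := by
  have h1 := congrFun (congrFun h p) q
  rw [Matrix.smul_apply, Matrix.smul_apply, Matrix.single_apply_same] at h1
  by_cases hpa : a = p ∧ d = q
  · obtain ⟨rfl, rfl⟩ := hpa
    rw [Matrix.single_apply_same] at h1
    exact ⟨rfl, rfl, by simpa using h1⟩
  · rw [Matrix.single_apply_of_ne (h := hpa)] at h1
    simp at h1
    exact absurd h1 hs

/-- if the elementary Lie automorphism `φ` induces the bijection `θ` of
`B = {e_{xy} : x < y}` and the scalar map `σ` (so `φ(e_{xy}) = σ(x,y)·θ(e_{xy})`), then for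
`x < y < z` either `θ(e_{xz}) = θ(e_{xy})θ(e_{yz})` and `σ(x,z) = σ(x,y)σ(y,z)`, or
`θ(e_{xz}) = θ(e_{yz})θ(e_{xy})` and `σ(x,z) = −σ(x,y)σ(y,z)`. -/
theorem stmt17 (hconn : PosetConnected X)
    (φ : IncAlg K X ≃ₗ[K] IncAlg K X) (hφ : IsLieAut φ) (hel : IsElementary φ)
    (θ : {p : X × X // p.1 < p.2} → {p : X × X // p.1 < p.2}) (hθ : Function.Bijective θ)
    (σ : {p : X × X // p.1 < p.2} → K) (hσ : ∀ p, σ p ≠ 0)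
    (hφθ : ∀ p : {p : X × X // p.1 < p.2},
      (φ (eE K p.1.1 p.1.2 p.2.le) : Matrix X X K) =
        σ p • Matrix.single (θ p).1.1 (θ p).1.2 (1 : K))
    (x y z : X) (hxy : x < y) (hyz : y < z) :
    (Matrix.single (θ ⟨(x, z), hxy.trans hyz⟩).1.1 (θ ⟨(x, z), hxy.trans hyz⟩).1.2
          (1 : K) =
        Matrix.single (θ ⟨(x, y), hxy⟩).1.1 (θ ⟨(x, y), hxy⟩).1.2 (1 : K) *
          Matrix.single (θ ⟨(y, z), hyz⟩).1.1 (θ ⟨(y, z), hyz⟩).1.2 (1 : K) ∧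
        σ ⟨(x, z), hxy.trans hyz⟩ = σ ⟨(x, y), hxy⟩ * σ ⟨(y, z), hyz⟩) ∨
    (Matrix.single (θ ⟨(x, z), hxy.trans hyz⟩).1.1 (θ ⟨(x, z), hxy.trans hyz⟩).1.2
          (1 : K) =
        Matrix.single (θ ⟨(y, z), hyz⟩).1.1 (θ ⟨(y, z), hyz⟩).1.2 (1 : K) *
          Matrix.single (θ ⟨(x, y), hxy⟩).1.1 (θ ⟨(x, y), hxy⟩).1.2 (1 : K) ∧
        σ ⟨(x, z), hxy.trans hyz⟩ = -(σ ⟨(x, y), hxy⟩ * σ ⟨(y, z), hyz⟩)) := by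
  have hxz := hxy.trans hyz
  -- basis identity in the incidence algebra
  have heE : eE K x z hxz.le =
      eE K x y hxy.le * eE K y z hyz.le - eE K y z hyz.le * eE K x y hxy.le := by
    apply Subtype.ext
    push_cast [eE]
    rw [Matrix.single_mul_single_same, Matrix.single_mul_single_of_ne (h := hxz.ne')]
    simp
  have key : (φ (eE K x z hxz.le) : Matrix X X K) =
      (φ (eE K x y hxy.le) : Matrix X X K) * (φ (eE K y z hyz.le) : Matrix X X K) -
      (φ (eE K y z hyz.le) : Matrix X X K) * (φ (eE K x y hxy.le) : Matrix X X K) := by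
    rw [heE, hφ]
    push_cast
    ring
  rw [hφθ ⟨(x, z), hxz⟩, hφθ ⟨(x, y), hxy⟩, hφθ ⟨(y, z), hyz⟩] at key
  set a := (θ ⟨(x, y), hxy⟩).1.1
  set b := (θ ⟨(x, y), hxy⟩).1.2
  set c := (θ ⟨(y, z), hyz⟩).1.1
  set d := (θ ⟨(y, z), hyz⟩).1.2
  set p := (θ ⟨(x, z), hxz⟩).1.1
  set q := (θ ⟨(x, z), hxz⟩).1.2
  have hab : a < b := (θ ⟨(x, y), hxy⟩).2
  have hcd : c < d := (θ ⟨(y, z), hyz⟩).2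
  have hs1 := hσ ⟨(x, y), hxy⟩
  have hs2 := hσ ⟨(y, z), hyz⟩
  have hsz := hσ ⟨(x, z), hxz⟩
  by_cases hbc : b = c
  · have hda : d ≠ a := by
      intro hda
      exact absurd ((hab.trans_eq hbc).trans (hcd.trans_eq hda)) (lt_irrefl a)
    rw [smul_mul_smul_comm, smul_mul_smul_comm, hbc, Matrix.single_mul_single_same,
      Matrix.single_mul_single_of_ne (h := hda), one_mul, smul_zero, sub_zero] at key
    obtain ⟨hp, hq, hs⟩ := smul_std_eq_smul_std hsz key
    left
    refine ⟨?_, hs⟩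
    rw [hp, hq, hbc, Matrix.single_mul_single_same, one_mul]
  · by_cases hda : d = a
    · rw [smul_mul_smul_comm, smul_mul_smul_comm, hda,
        Matrix.single_mul_single_of_ne (h := hbc),
        Matrix.single_mul_single_same, one_mul, smul_zero, zero_sub, ← neg_smul,
        mul_comm (σ ⟨(y, z), hyz⟩)] at key
      obtain ⟨hp, hq, hs⟩ := smul_std_eq_smul_std hsz key
      right
      refine ⟨?_, hs⟩
      rw [hp, hq, hda, Matrix.single_mul_single_same, one_mul]
    · exfalso
      rw [smul_mul_smul_comm, smul_mul_smul_comm, Matrix.single_mul_single_of_ne (h := hbc),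
        Matrix.single_mul_single_of_ne (h := hda), smul_zero, smul_zero, sub_zero] at key
      have h1 := congrFun (congrFun key p) q
      simp [Matrix.single] at h1
      exact absurd h1 hsz
end

section
/- Let φ be an elementary Lie automorphism of I(X,K) with φ(e_{xy}) = σ(x,y)·e_{uv} where θ(e_{xy}) = e_{uv}. Then for every z ∈ X: φ(e_z)(v,v) − φ(e_z)(u,u) equals −1 if z = x, equals 1 if z = y, and equals 0 otherwise. -/
set_option maxHeartbeats 1000000
set_option synthInstance.maxHeartbeats 400000

open Matrix

variable (K X : Type*) [Field K] [Fintype X] [PartialOrder X] [DecidableEq X]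

/-- if the elementary Lie automorphism `φ` satisfies
`φ(e_{xy}) = σ·e_{uv}`, then `φ(e_z)(v,v) − φ(e_z)(u,u)` is `−1` for `z = x`, `1` for
`z = y`, and `0` otherwise. -/
theorem stmt18 (hconn : PosetConnected X)
    (φ : IncAlg K X ≃ₗ[K] IncAlg K X) (hφ : IsLieAut φ) (hel : IsElementary φ)
    (x y u v : X) (hxy : x < y) (huv : u < v) (σ : K) (hσ : σ ≠ 0)
    (h : (φ (eE K x y hxy.le) : Matrix X X K) = σ • Matrix.single u v (1 : K))
    (z : X) :
    (φ (eE K z z le_rfl) : Matrix X X K) v v - (φ (eE K z z le_rfl) : Matrix X X K) u u =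
      if z = x then -1 else if z = y then 1 else 0 := by
  classical
  have key := hφ (eE K z z le_rfl) (eE K x y hxy.le)
  set a := eE K z z le_rfl with ha
  set b := eE K x y hxy.le with hb
  set c : K := (if z = x then (1:K) else 0) - (if z = y then 1 else 0) with hc
  have hab : a * b - b * a = c • b := by
    apply Subtype.ext
    show (a : Matrix X X K) * (b : Matrix X X K) - (b : Matrix X X K) * (a : Matrix X X K)
        = c • (b : Matrix X X K)
    have hca : (a : Matrix X X K) = Matrix.single z z 1 := rfl
    have hcb : (b : Matrix X X K) = Matrix.single x y 1 := rfl
    rw [hca, hcb, hc]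
    by_cases hzx : z = x
    · subst hzx
      have hzy : z ≠ y := ne_of_lt hxy
      simp [hzy, Ne.symm hzy]
    · by_cases hzy : z = y
      · subst hzy
        simp [hzx, Ne.symm hzx]
      · simp [hzx, hzy, Ne.symm hzx, Ne.symm hzy]
  rw [hab, _root_.map_smul] at key
  have key2 : (c • (φ b : Matrix X X K)) = (φ a : Matrix X X K) * (φ b : Matrix X X K)
      - (φ b : Matrix X X K) * (φ a : Matrix X X K) := by
    have := congrArg (Subtype.val) key
    simpa using this
  rw [h] at key2
  have key3 := congrFun (congrFun key2 u) v
  set D := (φ a : Matrix X X K) with hD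
  have hl : (c • σ • Matrix.single u v (1:K)) u v = c * σ := by
    simp [Matrix.single_apply_same]
  have hr : (D * σ • Matrix.single u v (1:K)
      - σ • Matrix.single u v (1:K) * D) u v = σ * D u u - σ * D v v := by
    simp [Matrix.sub_apply, Matrix.mul_smul, Matrix.smul_mul, mul_comm]
  rw [hl, hr] at key3
  have hσ2 : D v v - D u u = -c := by
    have h5 : σ * (D v v - D u u) = σ * (-c) := by linear_combination key3
    exact mul_left_cancel₀ hσ h5
  rw [hσ2, hc]
  have hxy' : x ≠ y := ne_of_lt hxy
  by_cases hzx : z = x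
  · have hzy : z ≠ y := by rw [hzx]; exact hxy'
    rw [if_pos hzx, if_pos hzx, if_neg hzy]; norm_num
  · rw [if_neg hzx, if_neg hzx]
    by_cases hzy : z = y
    · rw [if_pos hzy]; norm_num
    · rw [if_neg hzy]; norm_num
end
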